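/- A nonzero R-module M is dual Baer if and only if IM is a direct summand of M for every right ideal I of S = End_R(M). -/

import Mathlib

universe u v

/-- `M` is a dual Baer module: for every submodule `N` of `M`, the right ideal
`Hom_R(M,N)` of `End_R(M)` is generated by an idempotent. -/
def IsDualBaerModule (R : Type u) [Ring R] (M : Type v) [AddCommGroup M]
    [Module R M] : Prop :=
  ∀ N : Submodule R M, ∃ e : Module.End R M, IsIdempotentElem e ∧
    {f : Module.End R M | LinearMap.range f ≤ N} = Set.range fun s => e * s

theorem stmt4 (R : Type u) [Ring R] (M : Type v) [AddCommGroup M] [Module R M]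
    [Nontrivial M] :
    IsDualBaerModule R M ↔
      ∀ I : Submodule (Module.End R M)ᵐᵒᵖ (Module.End R M), ∃ p : Submodule R M,
        IsCompl (⨆ f ∈ (I : Set (Module.End R M)), LinearMap.range f) p := by
  constructor
  · intro h I
    set N := ⨆ f ∈ (I : Set (Module.End R M)), LinearMap.range f with hNdef
    obtain ⟨e, he, hset⟩ := h N
    have hN : N = LinearMap.range e := by
      apply le_antisymm
      · refine iSup₂_le fun f hf => ?_
        have hm : f ∈ {f : Module.End R M | LinearMap.range f ≤ N} :=
          le_iSup₂ (f := fun (f : Module.End R M) (_ : f ∈ (I : Set (Module.End R M))) =>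
            LinearMap.range f) f hf
        rw [hset] at hm
        obtain ⟨s, rfl⟩ := hm
        exact LinearMap.range_comp_le_range s e
      · have hm : e ∈ Set.range fun s => e * s := ⟨1, by simp⟩
        rw [← hset] at hm
        exact hm
    rw [hN]
    refine ⟨LinearMap.ker (e.codRestrict (LinearMap.range e) (fun x => ⟨x, rfl⟩)), ?_⟩
    have := LinearMap.isCompl_of_proj
      (f := e.codRestrict (LinearMap.range e) (fun x => ⟨x, rfl⟩)) ?_
    · exact this
    · rintro ⟨x, y, rfl⟩
      ext
      exact congrFun (congrArg DFunLike.coe he) y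
  · intro h N
    set I : Submodule (Module.End R M)ᵐᵒᵖ (Module.End R M) :=
      { carrier := {f | LinearMap.range f ≤ N}
        add_mem' := fun {f g} hf hg x hx => by
          obtain ⟨y, rfl⟩ := hx
          exact Submodule.add_mem _ (hf ⟨y, rfl⟩) (hg ⟨y, rfl⟩)
        zero_mem' := by simp
        smul_mem' := fun c f hf => le_trans (LinearMap.range_comp_le_range c.unop f) hf }
      with hIdef
    obtain ⟨p, hp⟩ := h I
    set K := ⨆ f ∈ (I : Set (Module.End R M)), LinearMap.range f with hKdef
    have hKN : K ≤ N := iSup₂_le fun f hf => hf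
    set e : Module.End R M := K.subtype ∘ₗ (K.projectionOnto p hp) with hedef
    have heK : ∀ x ∈ K, e x = x := fun x hx => by
      simp [hedef, Submodule.projectionOnto_apply_left hp ⟨x, hx⟩]
    have hrange : ∀ x, e x ∈ K := fun x => (K.projectionOnto p hp x).2
    refine ⟨e, ?_, ?_⟩
    · ext x
      exact heK (e x) (hrange x)
    · ext f
      constructor
      · intro hf
        refine ⟨f, ?_⟩
        have hfI : f ∈ I := hf
        have hfK : LinearMap.range f ≤ K :=
          le_iSup₂ (f := fun (f : Module.End R M) (_ : f ∈ (I : Set (Module.End R M))) =>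
            LinearMap.range f) f hfI
        ext x
        exact heK (f x) (hfK ⟨x, rfl⟩)
      · rintro ⟨s, rfl⟩
        intro x hx
        obtain ⟨y, rfl⟩ := hx
        exact hKN (hrange (s y))
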